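/- For any spinor field φ on a Spin^c manifold and any symmetric 2-tensor E and skew-symmetric 2-tensor Q on TM, the modified connection ∇̃_X φ := ∇_X φ + E(X)·φ + Q(X)·φ satisfies pointwise |∇̃φ|² = |∇φ|² + (|E|² + |Q|²)|φ|² + 2∑ᵢ Re⟨(E+Q)(eᵢ)·φ, ∇_{eᵢ}φ⟩; in particular when E = ℓ^φ and Q = q^φ one has |∇̃φ|² = |∇φ|² − (|ℓ^φ|² + |q^φ|²)|φ|². -/

import Mathlib

open ComplexConjugate

section helpers

variable {V H : Type*} [NormedAddCommGroup V] [InnerProductSpace ℝ V]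
  [NormedAddCommGroup H] [InnerProductSpace ℂ H]

/-- Real part of `⟪v·ψ, w·ψ⟫` equals `⟪v,w⟫ ‖ψ‖²`. -/
lemma aux_clre (cl : V →ₗ[ℝ] H →ₗ[ℂ] H)
    (hclifford : ∀ (v w : V) (φ : H),
      cl v (cl w φ) + cl w (cl v φ) = -(((2 * (inner ℝ v w : ℝ)) : ℂ)) • φ)
    (hskew : ∀ (v : V) (φ₁ φ₂ : H), (inner ℂ (cl v φ₁) φ₂ : ℂ) = - inner ℂ φ₁ (cl v φ₂))
    (ψ : H) (v w : V) :
    (inner ℂ (cl v ψ) (cl w ψ) : ℂ).re = (inner ℝ v w : ℝ) * ‖ψ‖ ^ 2 := by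
  have h1 : (inner ℂ (cl v ψ) (cl w ψ) : ℂ) = - inner ℂ ψ (cl v (cl w ψ)) := hskew v ψ (cl w ψ)
  have h2 : (inner ℂ (cl w ψ) (cl v ψ) : ℂ) = - inner ℂ ψ (cl w (cl v ψ)) := hskew w ψ (cl v ψ)
  have key : (inner ℂ (cl v ψ) (cl w ψ) : ℂ) + inner ℂ (cl w ψ) (cl v ψ)
      = ((2 * (inner ℝ v w : ℝ) : ℝ) : ℂ) * inner ℂ ψ ψ := by
    rw [h1, h2, ← neg_add, ← inner_add_right, hclifford, inner_smul_right]
    push_cast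
    ring
  have hconj : (inner ℂ (cl w ψ) (cl v ψ) : ℂ) = conj (inner ℂ (cl v ψ) (cl w ψ) : ℂ) :=
    (inner_conj_symm _ _).symm
  have hψψ : (inner ℂ ψ ψ : ℂ).re = ‖ψ‖ ^ 2 := by
    have := norm_sq_eq_re_inner (𝕜 := ℂ) ψ
    simpa using this.symm
  have hre := congrArg Complex.re key
  rw [hconj, Complex.add_conj, Complex.ofReal_re, Complex.mul_re] at hre
  simp only [Complex.ofReal_re, Complex.ofReal_im, zero_mul, sub_zero, hψψ] at hre
  linarith

end helpers

/-- (Pointwise, in a fixed fibre of the spinor bundle.)  Let `cl` be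
Clifford multiplication by tangent vectors (skew-Hermitian, satisfying the Clifford
relation), `e` an orthonormal tangent frame, `ψ` the value of the spinor field `φ` and
`d v = ∇_v φ` its covariant derivative.  For any symmetric `E` and skew-symmetric `Q`, the
modified connection `∇̃_X φ = ∇_X φ + E(X)·φ + Q(X)·φ` satisfies
`|∇̃φ|² = |∇φ|² + (|E|² + |Q|²)|φ|² + 2∑ᵢ Re⟨(E+Q)(eᵢ)·φ, ∇_{eᵢ}φ⟩`;
in particular, when `E = ℓ^φ` and `Q = q^φ` (the energy–momentum tensors of `φ`),
`|∇̃φ|² = |∇φ|² − (|ℓ^φ|² + |q^φ|²)|φ|²`. -/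
theorem stmt_4 {V H : Type*} [NormedAddCommGroup V] [InnerProductSpace ℝ V]
    [FiniteDimensional ℝ V] [NormedAddCommGroup H] [InnerProductSpace ℂ H]
    {n : ℕ} (e : OrthonormalBasis (Fin n) ℝ V)
    (cl : V →ₗ[ℝ] H →ₗ[ℂ] H)
    (hclifford : ∀ (v w : V) (φ : H),
      cl v (cl w φ) + cl w (cl v φ) = -(((2 * (inner ℝ v w : ℝ)) : ℂ)) • φ)
    (hskew : ∀ (v : V) (φ₁ φ₂ : H), (inner ℂ (cl v φ₁) φ₂ : ℂ) = - inner ℂ φ₁ (cl v φ₂))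
    (ψ : H) (d : V →ₗ[ℝ] H) (E Q : V →ₗ[ℝ] V)
    (hE : ∀ v w, (inner ℝ (E v) w : ℝ) = (inner ℝ v (E w) : ℝ))
    (hQ : ∀ v w, (inner ℝ (Q v) w : ℝ) = -(inner ℝ v (Q w) : ℝ)) :
    (∑ i, ‖d (e i) + cl (E (e i)) ψ + cl (Q (e i)) ψ‖ ^ 2 =
        ∑ i, ‖d (e i)‖ ^ 2
          + ((∑ i, ‖E (e i)‖ ^ 2) + ∑ i, ‖Q (e i)‖ ^ 2) * ‖ψ‖ ^ 2
          + 2 * ∑ i, (inner ℂ (cl (E (e i) + Q (e i)) ψ) (d (e i)) : ℂ).re)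
    ∧ (ψ ≠ 0 →
        -- E = ℓ^ψ and Q = q^ψ, the symmetric and antisymmetric energy–momentum tensors
        (∀ v w, (inner ℝ (E v) w : ℝ) =
          (1 / 2) * ((inner ℂ ψ (cl v (d w) + cl w (d v)) : ℂ).re) / ‖ψ‖ ^ 2) →
        (∀ v w, (inner ℝ (Q v) w : ℝ) =
          (1 / 2) * ((inner ℂ ψ (cl w (d v) - cl v (d w)) : ℂ).re) / ‖ψ‖ ^ 2) →
        ∑ i, ‖d (e i) + cl (E (e i)) ψ + cl (Q (e i)) ψ‖ ^ 2 =
          ∑ i, ‖d (e i)‖ ^ 2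
            - ((∑ i, ‖E (e i)‖ ^ 2) + ∑ i, ‖Q (e i)‖ ^ 2) * ‖ψ‖ ^ 2) := by
  have clre := aux_clre cl hclifford hskew ψ
  -- norm of Clifford products
  have clnorm : ∀ v : V, ‖cl v ψ‖ ^ 2 = ‖v‖ ^ 2 * ‖ψ‖ ^ 2 := by
    intro v
    have h := clre v v
    rw [real_inner_self_eq_norm_sq] at h
    rw [@norm_sq_eq_re_inner ℂ]
    simpa using h
  -- trace of E ∘ Q vanishes
  have htrace : ∑ i, (inner ℝ (E (e i)) (Q (e i)) : ℝ) = 0 := by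
    have hrw : ∀ i, (inner ℝ (E (e i)) (Q (e i)) : ℝ)
        = ∑ j, (inner ℝ (E (e i)) (e j) : ℝ) * (inner ℝ (Q (e i)) (e j) : ℝ) := by
      intro i
      rw [← e.sum_inner_mul_inner (E (e i)) (Q (e i))]
      refine Finset.sum_congr rfl fun j _ => ?_
      rw [real_inner_comm (e j) (Q (e i))]
    have hanti : ∀ i j, (inner ℝ (E (e i)) (e j) : ℝ) * (inner ℝ (Q (e i)) (e j) : ℝ)
        = -((inner ℝ (E (e j)) (e i) : ℝ) * (inner ℝ (Q (e j)) (e i) : ℝ)) := by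
      intro i j
      rw [hE, real_inner_comm (e i) (E (e j)), hQ, real_inner_comm (e i) (Q (e j))]
      ring
    have h1 : ∑ i, ∑ j, (inner ℝ (E (e i)) (e j) : ℝ) * (inner ℝ (Q (e i)) (e j) : ℝ)
        = ∑ j, ∑ i, (inner ℝ (E (e i)) (e j) : ℝ) * (inner ℝ (Q (e i)) (e j) : ℝ) :=
      Finset.sum_comm
    have h2 : ∑ j, ∑ i, (inner ℝ (E (e i)) (e j) : ℝ) * (inner ℝ (Q (e i)) (e j) : ℝ)
        = -∑ i, ∑ j, (inner ℝ (E (e i)) (e j) : ℝ) * (inner ℝ (Q (e i)) (e j) : ℝ) := by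
      rw [← Finset.sum_neg_distrib]
      refine Finset.sum_congr rfl fun j _ => ?_
      rw [← Finset.sum_neg_distrib]
      exact Finset.sum_congr rfl fun i _ => by rw [hanti i j]
    simp_rw [hrw]
    linarith [h1, h2]
  -- Parseval for norms
  have hpars : ∀ x : V, ∑ j, (inner ℝ x (e j) : ℝ) ^ 2 = ‖x‖ ^ 2 := by
    intro x
    have := e.sum_inner_mul_inner x x
    rw [real_inner_self_eq_norm_sq] at this
    rw [← this]
    refine Finset.sum_congr rfl fun j _ => ?_
    rw [real_inner_comm (e j) x]
    ring
  -- pointwise expansion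
  have expand : ∀ i, ‖d (e i) + cl (E (e i)) ψ + cl (Q (e i)) ψ‖ ^ 2
      = ‖d (e i)‖ ^ 2 + (‖E (e i)‖ ^ 2 + ‖Q (e i)‖ ^ 2) * ‖ψ‖ ^ 2
        + 2 * (inner ℂ (cl (E (e i) + Q (e i)) ψ) (d (e i)) : ℂ).re
        + 2 * ((inner ℝ (E (e i)) (Q (e i)) : ℝ) * ‖ψ‖ ^ 2) := by
    intro i
    set a := d (e i) with ha
    set b := cl (E (e i)) ψ with hb
    set c := cl (Q (e i)) ψ with hc
    have hbc : cl (E (e i) + Q (e i)) ψ = b + c := by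
      rw [map_add]; rfl
    have h1 : ‖a + b + c‖ ^ 2 = ‖(b + c) + a‖ ^ 2 := by
      rw [add_assoc, add_comm a (b + c)]
    have h2 : ‖(b + c) + a‖ ^ 2
        = ‖b + c‖ ^ 2 + 2 * (inner ℂ (b + c) a : ℂ).re + ‖a‖ ^ 2 := by
      exact norm_add_sq (𝕜 := ℂ) (b + c) a
    have h3 : ‖b + c‖ ^ 2 = ‖b‖ ^ 2 + 2 * (inner ℂ b c : ℂ).re + ‖c‖ ^ 2 := by
      simpa using norm_add_sq (𝕜 := ℂ) b c
    rw [h1, h2, h3, hbc, clnorm, clnorm, clre]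
    have := e.orthonormal
    ring
  -- the common first identity
  have hmain : ∑ i, ‖d (e i) + cl (E (e i)) ψ + cl (Q (e i)) ψ‖ ^ 2 =
      ∑ i, ‖d (e i)‖ ^ 2
        + ((∑ i, ‖E (e i)‖ ^ 2) + ∑ i, ‖Q (e i)‖ ^ 2) * ‖ψ‖ ^ 2
        + 2 * ∑ i, (inner ℂ (cl (E (e i) + Q (e i)) ψ) (d (e i)) : ℂ).re := by
    simp_rw [expand]
    rw [Finset.sum_add_distrib, Finset.sum_add_distrib, Finset.sum_add_distrib]
    have s1 : ∑ i, (‖E (e i)‖ ^ 2 + ‖Q (e i)‖ ^ 2) * ‖ψ‖ ^ 2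
        = ((∑ i, ‖E (e i)‖ ^ 2) + ∑ i, ‖Q (e i)‖ ^ 2) * ‖ψ‖ ^ 2 := by
      simp_rw [add_mul]
      rw [Finset.sum_add_distrib, ← Finset.sum_mul, ← Finset.sum_mul]
    have s2 : ∑ i, 2 * ((inner ℝ (E (e i)) (Q (e i)) : ℝ) * ‖ψ‖ ^ 2) = 0 := by
      calc ∑ i, 2 * ((inner ℝ (E (e i)) (Q (e i)) : ℝ) * ‖ψ‖ ^ 2)
          = (2 * ‖ψ‖ ^ 2) * ∑ i, (inner ℝ (E (e i)) (Q (e i)) : ℝ) := by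
            rw [Finset.mul_sum]
            exact Finset.sum_congr rfl fun i _ => by ring
        _ = 0 := by rw [htrace, mul_zero]
    rw [s1, s2, ← Finset.mul_sum]
    ring
  refine ⟨hmain, fun hψ hEdef hQdef => ?_⟩
  have hN : (‖ψ‖ : ℝ) ^ 2 ≠ 0 := pow_ne_zero _ (norm_ne_zero_iff.mpr hψ)
  -- α(w, v) = (⟪E v, w⟫ + ⟪Q v, w⟫) ‖ψ‖²
  have halpha : ∀ v w, (inner ℂ ψ (cl w (d v)) : ℂ).re
      = ((inner ℝ (E v) w : ℝ) + (inner ℝ (Q v) w : ℝ)) * ‖ψ‖ ^ 2 := by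
    intro v w
    have h1 := hEdef v w
    have h2 := hQdef v w
    rw [inner_add_right, Complex.add_re] at h1
    rw [inner_sub_right, Complex.sub_re] at h2
    field_simp at h1 h2 ⊢
    linarith
  -- cross term evaluation
  have hcross : ∀ i, (inner ℂ (cl (E (e i) + Q (e i)) ψ) (d (e i)) : ℂ).re
      = -(∑ j, ((inner ℝ (E (e i)) (e j) : ℝ) + (inner ℝ (Q (e i)) (e j) : ℝ)) ^ 2) * ‖ψ‖ ^ 2 := by
    intro i
    set u := E (e i) + Q (e i) with hu
    have hA : (inner ℂ (cl u ψ) (d (e i)) : ℂ).re = -(inner ℂ ψ (cl u (d (e i))) : ℂ).re := by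
      rw [hskew u ψ (d (e i)), Complex.neg_re]
    have hexp : u = ∑ j, (inner ℝ (e j) u : ℝ) • e j := by
      conv_lhs => rw [← e.sum_repr u]
      refine Finset.sum_congr rfl fun j _ => ?_
      rw [e.repr_apply_apply]
    have hB : (inner ℂ ψ (cl u (d (e i))) : ℂ).re
        = ∑ j, (inner ℝ (e j) u : ℝ) * (inner ℂ ψ (cl (e j) (d (e i))) : ℂ).re := by
      conv_lhs => rw [hexp]
      rw [map_sum]
      simp only [LinearMap.sum_apply, inner_sum, Complex.re_sum]
      refine Finset.sum_congr rfl fun j _ => ?_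
      rw [map_smul, LinearMap.smul_apply, ← Complex.coe_smul, inner_smul_right]
      simp [Complex.mul_re]
    have hcoef : ∀ j, (inner ℝ (e j) u : ℝ)
        = (inner ℝ (E (e i)) (e j) : ℝ) + (inner ℝ (Q (e i)) (e j) : ℝ) := by
      intro j
      rw [hu, inner_add_right, real_inner_comm (e j) (E (e i)),
        real_inner_comm (e j) (Q (e i))]
    have hstep : ∑ j, (inner ℝ (e j) u : ℝ) * (inner ℂ ψ (cl (e j) (d (e i))) : ℂ).re
        = (∑ j, ((inner ℝ (E (e i)) (e j) : ℝ) + (inner ℝ (Q (e i)) (e j) : ℝ)) ^ 2) * ‖ψ‖ ^ 2 := by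
      rw [Finset.sum_mul]
      refine Finset.sum_congr rfl fun j _ => ?_
      rw [hcoef j, halpha (e i) (e j)]
      ring
    rw [hA, hB, hstep]
    ring
  -- sum of cross terms
  have hsumcross : ∑ i, (inner ℂ (cl (E (e i) + Q (e i)) ψ) (d (e i)) : ℂ).re
      = -((∑ i, ‖E (e i)‖ ^ 2) + ∑ i, ‖Q (e i)‖ ^ 2) * ‖ψ‖ ^ 2 := by
    simp_rw [hcross]
    have hsq : ∀ i, ∑ j, ((inner ℝ (E (e i)) (e j) : ℝ) + (inner ℝ (Q (e i)) (e j) : ℝ)) ^ 2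
        = ‖E (e i)‖ ^ 2 + ‖Q (e i)‖ ^ 2
          + 2 * ∑ j, (inner ℝ (E (e i)) (e j) : ℝ) * (inner ℝ (Q (e i)) (e j) : ℝ) := by
      intro i
      rw [← hpars (E (e i)), ← hpars (Q (e i)), Finset.mul_sum,
        ← Finset.sum_add_distrib, ← Finset.sum_add_distrib]
      refine Finset.sum_congr rfl fun j _ => ?_
      ring
    have hz : ∑ i, ∑ j, (inner ℝ (E (e i)) (e j) : ℝ) * (inner ℝ (Q (e i)) (e j) : ℝ) = 0 := by
      have hrw : ∀ i, (inner ℝ (E (e i)) (Q (e i)) : ℝ)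
          = ∑ j, (inner ℝ (E (e i)) (e j) : ℝ) * (inner ℝ (Q (e i)) (e j) : ℝ) := by
        intro i
        rw [← e.sum_inner_mul_inner (E (e i)) (Q (e i))]
        refine Finset.sum_congr rfl fun j _ => ?_
        rw [real_inner_comm (e j) (Q (e i))]
      simp_rw [← hrw]
      exact htrace
    have expand2 : ∀ i, -(∑ j, ((inner ℝ (E (e i)) (e j) : ℝ) + (inner ℝ (Q (e i)) (e j) : ℝ)) ^ 2)
          * ‖ψ‖ ^ 2
        = -(‖E (e i)‖ ^ 2 * ‖ψ‖ ^ 2) + -(‖Q (e i)‖ ^ 2 * ‖ψ‖ ^ 2)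
          + -(2 * ((∑ j, (inner ℝ (E (e i)) (e j) : ℝ) * (inner ℝ (Q (e i)) (e j) : ℝ)) * ‖ψ‖ ^ 2)) := by
      intro i
      rw [hsq i]
      ring
    simp_rw [expand2]
    have s3 : ∑ i, 2 * ((∑ j, (inner ℝ (E (e i)) (e j) : ℝ) * (inner ℝ (Q (e i)) (e j) : ℝ)) * ‖ψ‖ ^ 2)
        = 0 := by
      calc ∑ i, 2 * ((∑ j, (inner ℝ (E (e i)) (e j) : ℝ) * (inner ℝ (Q (e i)) (e j) : ℝ)) * ‖ψ‖ ^ 2)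
          = (2 * ‖ψ‖ ^ 2)
              * ∑ i, ∑ j, (inner ℝ (E (e i)) (e j) : ℝ) * (inner ℝ (Q (e i)) (e j) : ℝ) := by
            rw [Finset.mul_sum]
            exact Finset.sum_congr rfl fun i _ => by ring
        _ = 0 := by rw [hz, mul_zero]
    rw [Finset.sum_add_distrib, Finset.sum_add_distrib, Finset.sum_neg_distrib,
      Finset.sum_neg_distrib, Finset.sum_neg_distrib, ← Finset.sum_mul, ← Finset.sum_mul, s3]
    ring
  rw [hmain, hsumcross]
  ring
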